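/- Let L₁,…,L_n and R₁,…,R_n be infinite ICC groups such that, for each of them, every normal subgroup of every finite-index subgroup is either finite or of finite index. Let H ≤ L₁ × ⋯ × L_n and K ≤ R₁ × ⋯ × R_n be finite-index subgroups and φ : H → K a group isomorphism. Then there exists a permutation σ of {1,…,n} such that for every i, the subgroup φ(L_i ∩ H) of R₁ × ⋯ × R_n is commensurable with R_{σ(i)} (each R_j being viewed as the j-th coordinate subgroup of the product). -/

import Mathlib

/-- A group is ICC if every nontrivial conjugacy class is infinite. -/
def IsICC (G : Type*) [Group G] : Prop :=
  ∀ g : G, g ≠ 1 → (Set.range fun x : G => x * g * x⁻¹).Infinite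

/-- The normal subgroup dichotomy (Margulis), inherited by finite-index subgroups: every
normal subgroup of every finite-index subgroup is finite or of finite index. -/
def NormalSubgroupDichotomy (G : Type*) [Group G] : Prop :=
  ∀ Λ : Subgroup G, Λ.FiniteIndex →
    ∀ N : Subgroup G, N ≤ Λ → (∀ g ∈ Λ, ∀ x ∈ N, g * x * g⁻¹ ∈ N) →
      (N : Set G).Finite ∨ N.FiniteIndex

section Aux
variable {G : Type*} [Group G]

private lemma myRelindexNeZero {H : Subgroup G} (h : H.index ≠ 0) (K : Subgroup G) :
    H.relIndex K ≠ 0 := fun h0 =>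
  h (by
    rw [← Subgroup.relIndex_top_right]
    exact Subgroup.relIndex_eq_zero_of_le_right le_top h0)

private lemma mySubgroupInfinite [Infinite G] {H : Subgroup G} (h : H.index ≠ 0) :
    (H : Set G).Infinite := by
  intro hfin
  haveI : Finite H := hfin.to_subtype
  have h1 : Nat.card H ≠ 0 := Nat.card_ne_zero.mpr ⟨⟨1⟩, inferInstance⟩
  have h2 : Nat.card H * H.index = Nat.card G := Subgroup.card_mul_index H
  have h3 : Nat.card G = 0 := Nat.card_eq_zero_of_infinite
  exact mul_ne_zero h1 h (h2.trans h3)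

private lemma myFiniteNormalTrivial (hicc : IsICC G) {Λ F : Subgroup G}
    (hΛ : Λ.index ≠ 0) (hFfin : (F : Set G).Finite)
    (hconj : ∀ g ∈ Λ, ∀ x ∈ F, g * x * g⁻¹ ∈ F) : ∀ x ∈ F, x = 1 := by
  intro f hf
  by_contra hne
  haveI : Λ.FiniteIndex := ⟨hΛ⟩
  haveI : Finite (G ⧸ Λ) := Subgroup.finite_quotient_of_finiteIndex
  apply hicc f hne
  have hsub : (Set.range fun x : G => x * f * x⁻¹) ⊆
      ⋃ q : G ⧸ Λ, (fun y => q.out * y * q.out⁻¹) '' (F : Set G) := by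
    rintro _ ⟨x, rfl⟩
    refine Set.mem_iUnion.mpr ⟨QuotientGroup.mk x, ?_⟩
    set q : G ⧸ Λ := QuotientGroup.mk x with hq
    have hd : q.out⁻¹ * x ∈ Λ := by
      have h1 : (QuotientGroup.mk q.out : G ⧸ Λ) = QuotientGroup.mk x :=
        (QuotientGroup.out_eq' q).trans hq
      exact QuotientGroup.eq.mp h1
    refine ⟨(q.out⁻¹ * x) * f * (q.out⁻¹ * x)⁻¹, hconj _ hd f hf, ?_⟩
    group
  exact ((Set.finite_iUnion fun q => hFfin.image _).subset hsub)

private lemma myAbelianFalse (hicc : IsICC G) [Infinite G] {C : Subgroup G}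
    (hC : C.index ≠ 0) (habel : ∀ x ∈ C, ∀ y ∈ C, x * y = y * x) : False := by
  obtain ⟨c, hcd⟩ := ((mySubgroupInfinite hC).diff (Set.finite_singleton 1)).nonempty
  obtain ⟨hc, hc1⟩ := hcd
  have hc1 : c ≠ 1 := by simpa using hc1
  haveI : C.FiniteIndex := ⟨hC⟩
  haveI : Finite (G ⧸ C) := Subgroup.finite_quotient_of_finiteIndex
  apply hicc c hc1
  have hsub : (Set.range fun x : G => x * c * x⁻¹) ⊆
      Set.range fun q : G ⧸ C => q.out * c * q.out⁻¹ := by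
    rintro _ ⟨x, rfl⟩
    refine ⟨QuotientGroup.mk x, ?_⟩
    set q : G ⧸ C := QuotientGroup.mk x with hq
    have hd : q.out⁻¹ * x ∈ C := by
      have h1 : (QuotientGroup.mk q.out : G ⧸ C) = QuotientGroup.mk x :=
        (QuotientGroup.out_eq' q).trans hq
      exact QuotientGroup.eq.mp h1
    have hcomm : (q.out⁻¹ * x) * c = c * (q.out⁻¹ * x) := habel _ hd c hc
    have key : (q.out⁻¹ * x) * c * (q.out⁻¹ * x)⁻¹ = c := by
      rw [hcomm]; group
    calc q.out * c * q.out⁻¹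
        = q.out * ((q.out⁻¹ * x) * c * (q.out⁻¹ * x)⁻¹) * q.out⁻¹ := by rw [key]
      _ = x * c * x⁻¹ := by group
  exact ((Set.finite_range _).subset hsub)

end Aux

/-- Permutation lemma for products of (abstract) higher rank lattices: an isomorphism between
finite-index subgroups `H ≤ L₁ × ⋯ × Lₙ` and `K ≤ R₁ × ⋯ × Rₙ` matches, up to a permutation
`σ`, the subgroup `φ(Lᵢ ∩ H)` with the coordinate subgroup `R_{σ(i)}` up to commensurability. -/
theorem stmt14 {n : ℕ} (L R : Fin n → Type*) [∀ i, Group (L i)] [∀ i, Group (R i)]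
    (hLinf : ∀ i, Infinite (L i)) (hRinf : ∀ i, Infinite (R i))
    (hLicc : ∀ i, IsICC (L i)) (hRicc : ∀ i, IsICC (R i))
    (hLdich : ∀ i, NormalSubgroupDichotomy (L i))
    (hRdich : ∀ i, NormalSubgroupDichotomy (R i))
    (H : Subgroup (∀ i, L i)) (K : Subgroup (∀ i, R i))
    (hH : H.FiniteIndex) (hK : K.FiniteIndex)
    (φ : H ≃* K) :
    ∃ σ : Equiv.Perm (Fin n), ∀ i : Fin n,
      Subgroup.Commensurable
        (Subgroup.map (K.subtype.comp φ.toMonoidHom)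
          (Subgroup.comap H.subtype (MonoidHom.mulSingle L i).range))
        (MonoidHom.mulSingle R (σ i)).range := by
  classical
  set ψ : H →* (∀ i, R i) := K.subtype.comp φ.toMonoidHom with hψdef
  have hψapp : ∀ a : H, ψ a = ((φ a : K) : ∀ i, R i) := fun a => rfl
  have hψinj : Function.Injective ψ := by
    intro a b hab
    exact φ.injective (Subtype.ext hab)
  set N : Fin n → Subgroup H :=
    (fun i => Subgroup.comap H.subtype (MonoidHom.mulSingle L i).range) with hNdef
  set M : Fin n → Subgroup (∀ i, R i) := (fun i => (N i).map ψ) with hMdef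
  have hMleK : ∀ i, M i ≤ K := by
    intro i x hx
    obtain ⟨a, -, rfl⟩ := hx
    exact (φ a).2
  -- conjugation stability of `N i` in `H`
  have hconjN : ∀ i (h a : H), a ∈ N i → h * a * h⁻¹ ∈ N i := by
    intro i h a ha
    obtain ⟨w, hw⟩ := ha
    refine ⟨(h : ∀ k, L k) i * w * ((h : ∀ k, L k) i)⁻¹, ?_⟩
    have hav : (a : ∀ k, L k) = MonoidHom.mulSingle L i w := hw.symm
    show MonoidHom.mulSingle L i _ = ((h * a * h⁻¹ : H) : ∀ k, L k)
    funext k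
    by_cases hk : k = i
    · subst hk
      simp [hav, MonoidHom.mulSingle_apply]
    · simp [hav, MonoidHom.mulSingle_apply, Pi.mulSingle_eq_of_ne hk]
  -- normality of `M i` in `K`
  have hMnormal : ∀ i, ∀ k ∈ K, ∀ m ∈ M i, k * m * k⁻¹ ∈ M i := by
    intro i k hk m hm
    obtain ⟨a, ha, rfl⟩ := hm
    refine ⟨φ.symm ⟨k, hk⟩ * a * (φ.symm ⟨k, hk⟩)⁻¹, hconjN i _ a ha, ?_⟩
    rw [map_mul, map_mul, map_inv]
    have hka : ψ (φ.symm ⟨k, hk⟩) = k := by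
      rw [hψapp, MulEquiv.apply_symm_apply]
    rw [hka]
  -- elementwise commutation of `M i` and `M j` for `i ≠ j`
  have hMcomm : ∀ i j, i ≠ j → ∀ x ∈ M i, ∀ y ∈ M j, x * y = y * x := by
    intro i j hij x hx y hy
    obtain ⟨a, ha, rfl⟩ := hx
    obtain ⟨b, hb, rfl⟩ := hy
    rw [← map_mul, ← map_mul]
    congr 1
    obtain ⟨w, hw⟩ := ha
    obtain ⟨v, hv⟩ := hb
    have hw' : (a : ∀ k, L k) = MonoidHom.mulSingle L i w := hw.symm
    have hv' : (b : ∀ k, L k) = MonoidHom.mulSingle L j v := hv.symm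
    apply Subtype.ext
    show (a : ∀ k, L k) * b = (b : ∀ k, L k) * a
    rw [hw', hv']
    exact (Pi.mulSingle_commute hij w v).eq
  -- `M i` is infinite
  have hMinf : ∀ i, ((M i : Set (∀ k, R k))).Infinite := by
    intro i
    have hA'index : (Subgroup.comap (MonoidHom.mulSingle L i) H).index ≠ 0 := by
      rw [Subgroup.index_comap]
      exact myRelindexNeZero hH.index_ne_zero _
    haveI := hLinf i
    haveI : Infinite (Subgroup.comap (MonoidHom.mulSingle L i) H) :=
      (mySubgroupInfinite hA'index).to_subtype
    have hginj : Function.Injective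
        (fun a : (Subgroup.comap (MonoidHom.mulSingle L i) H) =>
          ψ ⟨MonoidHom.mulSingle L i a.1, a.2⟩) := by
      intro a b hab
      have h1 := hψinj hab
      have h2 : MonoidHom.mulSingle L i a.1 = MonoidHom.mulSingle L i b.1 :=
        congrArg Subtype.val h1
      have h3 := congrFun h2 i
      simp only [MonoidHom.mulSingle_apply, Pi.mulSingle_eq_same] at h3
      exact Subtype.ext h3
    exact Set.infinite_of_injective_forall_mem hginj
      (fun a => ⟨⟨MonoidHom.mulSingle L i a.1, a.2⟩, ⟨a.1, rfl⟩, rfl⟩)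
  -- projections to the factors
  set P : (_ : Fin n) → (j : Fin n) → Subgroup (R j) :=
    (fun i j => (M i).map (Pi.evalMonoidHom R j)) with hPdef
  have hevalsurj : ∀ j, Function.Surjective (Pi.evalMonoidHom R j) := fun j y =>
    ⟨Pi.mulSingle j y, Pi.mulSingle_eq_same j y⟩
  have hKj : ∀ j, (K.map (Pi.evalMonoidHom R j)).index ≠ 0 := fun j =>
    ne_zero_of_dvd_ne_zero hK.index_ne_zero (Subgroup.index_map_dvd (H := K) (hevalsurj j))
  have hPle : ∀ i j, P i j ≤ K.map (Pi.evalMonoidHom R j) := fun i j =>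
    Subgroup.map_mono (hMleK i)
  have hPconj : ∀ i j, ∀ g ∈ K.map (Pi.evalMonoidHom R j), ∀ x ∈ P i j,
      g * x * g⁻¹ ∈ P i j := by
    rintro i j _ ⟨k, hk, rfl⟩ _ ⟨m, hm, rfl⟩
    refine ⟨k * m * k⁻¹, hMnormal i k hk m hm, ?_⟩
    rw [map_mul, map_mul, map_inv]
  have hPdich : ∀ i j, ((P i j : Set (R j))).Finite ∨ (P i j).FiniteIndex :=
    fun i j => hRdich j _ ⟨hKj j⟩ _ (hPle i j) (hPconj i j)
  have hPcomm : ∀ i i' j, i ≠ i' → ∀ x ∈ P i j, ∀ y ∈ P i' j, x * y = y * x := by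
    rintro i i' j hii' _ ⟨m, hm, rfl⟩ _ ⟨m', hm', rfl⟩
    have hmm := hMcomm i i' hii' m hm m' hm'
    calc (Pi.evalMonoidHom R j) m * (Pi.evalMonoidHom R j) m' = (m * m') j := rfl
      _ = (m' * m) j := by rw [hmm]
      _ = (Pi.evalMonoidHom R j) m' * (Pi.evalMonoidHom R j) m := rfl
  -- every `M i` has at least one infinite projection
  have hExistsJ : ∀ i, ∃ j, ¬ ((P i j : Set (R j))).Finite := by
    intro i
    by_contra hfin
    push_neg at hfin
    apply hMinf i
    have hsub : (M i : Set (∀ k, R k)) ⊆ Set.pi Set.univ (fun j => (P i j : Set (R j))) := by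
      intro x hx j _
      exact ⟨x, hx, rfl⟩
    exact (Set.Finite.pi (fun j => hfin j)).subset hsub
  -- at most one `M i` has an infinite projection to a given factor
  have hUnique : ∀ i i' j, ¬((P i j : Set (R j))).Finite → ¬((P i' j : Set (R j))).Finite →
      i = i' := by
    intro i i' j hi hi'
    by_contra hne
    have hfi : (P i j).FiniteIndex := (hPdich i j).resolve_left hi
    have hfi' : (P i' j).FiniteIndex := (hPdich i' j).resolve_left hi'
    haveI := hRinf j
    refine myAbelianFalse (hRicc j) (C := P i j ⊓ P i' j)
      (Subgroup.index_inf_ne_zero hfi.index_ne_zero hfi'.index_ne_zero) ?_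
    intro x hx y hy
    exact hPcomm i i' j hne x (Subgroup.mem_inf.mp hx).1 y (Subgroup.mem_inf.mp hy).2
  choose g hg using hExistsJ
  have hginj : Function.Injective g := by
    intro i i' h
    have h2 := hg i'
    rw [← h] at h2
    exact hUnique i i' (g i) (hg i) h2
  have hgbij := Finite.injective_iff_bijective.mp hginj
  refine ⟨Equiv.ofBijective g hgbij, ?_⟩
  intro i
  show Subgroup.Commensurable (M i) (MonoidHom.mulSingle R (g i)).range
  set j := g i with hjdef
  -- all other projections of `M i` are finite, hence trivial
  have hPfin : ∀ j', j' ≠ j → ((P i j' : Set (R j'))).Finite := by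
    intro j' hne
    by_contra hinf
    obtain ⟨i'', hi''⟩ := hgbij.2 j'
    have h2 := hg i''
    rw [hi''] at h2
    have h3 : i'' = i := hUnique i'' i j' h2 hinf
    rw [h3] at hi''
    exact hne (hi''.symm.trans hjdef.symm)
  have hPtriv : ∀ j', j' ≠ j → ∀ x ∈ P i j', x = 1 := fun j' hne =>
    myFiniteNormalTrivial (hRicc j') (hKj j') (hPfin j' hne) (hPconj i j')
  -- `M i` is contained in the range of `mulSingle j`
  have hMx : ∀ x ∈ M i, MonoidHom.mulSingle R j (x j) = x := by
    intro x hx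
    funext k
    by_cases hk : k = j
    · subst hk
      simp [MonoidHom.mulSingle_apply]
    · rw [MonoidHom.mulSingle_apply, Pi.mulSingle_eq_of_ne hk]
      exact (hPtriv k hk (x k) ⟨x, hx, rfl⟩).symm
  refine ⟨?_, ?_⟩
  · -- `(M i).relindex range ≠ 0`
    have h1 : P i j ≤ (M i).comap (MonoidHom.mulSingle R j) := by
      rintro _ ⟨x, hx, rfl⟩
      show MonoidHom.mulSingle R j (x j) ∈ M i
      rw [hMx x hx]
      exact hx
    have h2 : ((M i).comap (MonoidHom.mulSingle R j)).index ≠ 0 :=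
      ne_zero_of_dvd_ne_zero ((hPdich i j).resolve_left (hg i)).index_ne_zero
        (Subgroup.index_dvd_of_le h1)
    rw [Subgroup.index_comap] at h2
    exact h2
  · -- `range.relindex (M i) ≠ 0`
    have htop : (MonoidHom.mulSingle R j).range.subgroupOf (M i) = ⊤ :=
      Subgroup.subgroupOf_eq_top.mpr (fun x hx => ⟨x j, hMx x hx⟩)
    show ((MonoidHom.mulSingle R j).range.subgroupOf (M i)).index ≠ 0
    rw [htop, Subgroup.index_top]
    exact one_ne_zero
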